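/- For quaternion matrices X (M×N), W (M×P) and a real matrix H (P×N), the real-valued function H ↦ ‖X − W·H‖²_F has gradient with respect to H equal to −2·Re[Wᵀ·conj(X − W·H)], where Re and conj are applied entrywise and ᵀ is the transpose. In particular, if Re[Wᵀ·conj(W)] is invertible, the unique minimizer over all real matrices H is H⋆ = (Re[Wᵀ·conj(W)])⁻¹·Re[Wᵀ·conj(X)]. -/

import Mathlib

open Quaternion

section Stmt16Aux

lemma re_sum' {ι : Type*} (s : Finset ι) (g : ι → ℍ[ℝ]) :
    (∑ i ∈ s, g i).re = ∑ i ∈ s, (g i).re :=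
  map_sum (QuaternionAlgebra.reₗ (-1:ℝ) 0 (-1)) g s

lemma norm_sq_q' (a : ℍ[ℝ]) : ‖a‖ ^ 2 = (a * star a).re := by
  rw [sq, ← Quaternion.normSq_eq_norm_mul_self, Quaternion.normSq_def]

lemma quad' (a b : ℍ[ℝ]) (t : ℝ) :
    ‖a - t • b‖ ^ 2 = ‖a‖ ^ 2 + (-2 * (a * star b).re) * t + ‖b‖ ^ 2 * t ^ 2 := by
  simp only [norm_sq_q']
  simp [QuaternionAlgebra.re_mul]
  ring

lemma quad1' (a b : ℍ[ℝ]) :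
    ‖a - b‖ ^ 2 = ‖a‖ ^ 2 + (-2 * (a * star b).re) + ‖b‖ ^ 2 := by
  simpa using quad' a b 1

lemma term_eq' (a w : ℍ[ℝ]) (v : ℝ) :
    (a * star (w * algebraMap ℝ ℍ[ℝ] v)).re = (w * star a).re * v := by
  simp [QuaternionAlgebra.re_mul, Quaternion.imI_mul, Quaternion.imJ_mul, Quaternion.imK_mul]; ring

lemma term_eq2' (w1 w2 : ℍ[ℝ]) (v : ℝ) :
    (w1 * star (w2 * algebraMap ℝ ℍ[ℝ] v)).re = (w1 * star w2).re * v := by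
  simp [QuaternionAlgebra.re_mul, Quaternion.imI_mul, Quaternion.imJ_mul, Quaternion.imK_mul]; ring

lemma map_re_apply' {a b : ℕ} (A : Matrix (Fin a) (Fin b) ℍ[ℝ]) (i : Fin a) (j : Fin b) :
    A.map QuaternionAlgebra.re i j = (A i j).re := rfl

variable {M N P : ℕ} (W : Matrix (Fin M) (Fin P) ℍ[ℝ])

lemma key_sum' (A : Matrix (Fin M) (Fin N) ℍ[ℝ]) (V : Matrix (Fin P) (Fin N) ℝ) :
    ∑ m, ∑ n, (A m n * star ((W * V.map (algebraMap ℝ ℍ[ℝ])) m n)).re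
      = ∑ p, ∑ n, ((W.transpose * A.map star).map QuaternionAlgebra.re) p n * V p n := by
  simp only [map_re_apply', Matrix.mul_apply, Matrix.map_apply, Matrix.transpose_apply,
    star_sum, Finset.mul_sum, re_sum', term_eq', Finset.sum_mul]
  rw [Finset.sum_comm]
  rw [show (∑ y : Fin N, ∑ x : Fin M, ∑ x_1 : Fin P, (W x x_1 * star (A x y)).re * V x_1 y)
      = ∑ y : Fin N, ∑ x_1 : Fin P, ∑ x : Fin M, (W x x_1 * star (A x y)).re * V x_1 y from
    Finset.sum_congr rfl fun y _ => Finset.sum_comm]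
  exact Finset.sum_comm

lemma mapre_decomp' (K : Matrix (Fin P) (Fin N) ℝ) :
    (W.transpose * ((W * K.map (algebraMap ℝ ℍ[ℝ])).map star)).map QuaternionAlgebra.re
      = ((W.transpose * W.map star).map QuaternionAlgebra.re) * K := by
  ext p n
  simp only [map_re_apply', Matrix.mul_apply, Matrix.map_apply, Matrix.transpose_apply,
    star_sum, Finset.mul_sum, re_sum', term_eq2', Finset.sum_mul]
  rw [Finset.sum_comm]

lemma map_algebra_add (K L : Matrix (Fin P) (Fin N) ℝ) :
    (K + L).map (algebraMap ℝ ℍ[ℝ]) = K.map (algebraMap ℝ ℍ[ℝ]) + L.map (algebraMap ℝ ℍ[ℝ]) := by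
  refine Matrix.ext fun p n => ?_
  simp [Matrix.map_apply]

lemma map_algebra_smul (t : ℝ) (K : Matrix (Fin P) (Fin N) ℝ) :
    (t • K).map (algebraMap ℝ ℍ[ℝ]) = t • K.map (algebraMap ℝ ℍ[ℝ]) := by
  refine Matrix.ext fun p n => ?_
  simp [Matrix.map_apply, Matrix.smul_apply, Algebra.smul_def]

end Stmt16Aux

theorem stmt_16 (M N P : ℕ)
    (X : Matrix (Fin M) (Fin N) ℍ[ℝ])
    (W : Matrix (Fin M) (Fin P) ℍ[ℝ])
    (f : Matrix (Fin P) (Fin N) ℝ → ℝ)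
    (hf : f = fun H => ∑ m, ∑ n, ‖(X - W * H.map (algebraMap ℝ ℍ[ℝ])) m n‖ ^ 2)
    (G : Matrix (Fin P) (Fin N) ℝ → Matrix (Fin P) (Fin N) ℝ)
    (hG : G = fun H => (-2 : ℝ) •
      ((W.transpose * ((X - W * H.map (algebraMap ℝ ℍ[ℝ])).map star)).map QuaternionAlgebra.re)) :
    (∀ (H V : Matrix (Fin P) (Fin N) ℝ),
      HasDerivAt (fun t : ℝ => f (H + t • V)) (∑ p, ∑ n, G H p n * V p n) 0) ∧
    (IsUnit ((W.transpose * W.map star).map QuaternionAlgebra.re) →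
      ∀ H : Matrix (Fin P) (Fin N) ℝ,
        f (((W.transpose * W.map star).map QuaternionAlgebra.re)⁻¹ *
            ((W.transpose * X.map star).map QuaternionAlgebra.re)) ≤ f H ∧
        (f H = f (((W.transpose * W.map star).map QuaternionAlgebra.re)⁻¹ *
            ((W.transpose * X.map star).map QuaternionAlgebra.re)) →
          H = ((W.transpose * W.map star).map QuaternionAlgebra.re)⁻¹ *
            ((W.transpose * X.map star).map QuaternionAlgebra.re))) := by
  subst hf hG
  have hent : ∀ (K D : Matrix (Fin P) (Fin N) ℝ) (m : Fin M) (n : Fin N),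
      (X - W * (K + D).map (algebraMap ℝ ℍ[ℝ])) m n
        = (X - W * K.map (algebraMap ℝ ℍ[ℝ])) m n - (W * D.map (algebraMap ℝ ℍ[ℝ])) m n := by
    intro K D m n
    rw [map_algebra_add, Matrix.mul_add]
    simp only [Matrix.sub_apply, Matrix.add_apply]
    rw [sub_add_eq_sub_sub]
  -- general expansion lemma
  have hexp : ∀ (K D : Matrix (Fin P) (Fin N) ℝ),
      (∑ m, ∑ n, ‖(X - W * (K + D).map (algebraMap ℝ ℍ[ℝ])) m n‖ ^ 2)
        = (∑ m, ∑ n, ‖(X - W * K.map (algebraMap ℝ ℍ[ℝ])) m n‖ ^ 2)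
          + ((-2) * ∑ p, ∑ n,
              ((W.transpose * ((X - W * K.map (algebraMap ℝ ℍ[ℝ])).map star)).map
                QuaternionAlgebra.re) p n * D p n)
          + ∑ m, ∑ n, ‖(W * D.map (algebraMap ℝ ℍ[ℝ])) m n‖ ^ 2 := by
    intro K D
    simp only [hent K D, quad1', Finset.sum_add_distrib]
    congr 1
    congr 1
    rw [← key_sum' W (X - W * K.map (algebraMap ℝ ℍ[ℝ])) D]
    simp only [Finset.mul_sum]
  constructor
  · intro H V
    have hme : ∀ (t : ℝ) (m : Fin M) (n : Fin N),
        (X - W * (H + t • V).map (algebraMap ℝ ℍ[ℝ])) m n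
          = (X - W * H.map (algebraMap ℝ ℍ[ℝ])) m n
            - t • ((W * V.map (algebraMap ℝ ℍ[ℝ])) m n) := by
      intro t m n
      rw [map_algebra_add, map_algebra_smul, Matrix.mul_add, Matrix.mul_smul]
      simp only [Matrix.sub_apply, Matrix.add_apply, Matrix.smul_apply]
      rw [sub_add_eq_sub_sub]
    have hcross : (∑ m, ∑ n, -2 * (((X - W * H.map (algebraMap ℝ ℍ[ℝ])) m n)
          * star ((W * V.map (algebraMap ℝ ℍ[ℝ])) m n)).re)
        = ∑ p, ∑ n, ((-2 : ℝ) • ((W.transpose *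
            ((X - W * H.map (algebraMap ℝ ℍ[ℝ])).map star)).map QuaternionAlgebra.re)) p n * V p n := by
      simp only [Matrix.smul_apply, smul_eq_mul, mul_assoc, ← Finset.mul_sum]
      exact congrArg (fun z => -2 * z) (key_sum' W (X - W * H.map (algebraMap ℝ ℍ[ℝ])) V)
    have hfun : ∀ t : ℝ,
        (∑ m, ∑ n, ‖(X - W * (H + t • V).map (algebraMap ℝ ℍ[ℝ])) m n‖ ^ 2)
          = (∑ m, ∑ n, ‖(X - W * H.map (algebraMap ℝ ℍ[ℝ])) m n‖ ^ 2)
            + ((∑ p, ∑ n, ((-2 : ℝ) • ((W.transpose *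
                ((X - W * H.map (algebraMap ℝ ℍ[ℝ])).map star)).map QuaternionAlgebra.re)) p n * V p n) * t
              + (∑ m, ∑ n, ‖(W * V.map (algebraMap ℝ ℍ[ℝ])) m n‖ ^ 2) * t ^ 2) := by
      intro t
      simp only [hme t, quad', Finset.sum_add_distrib, ← Finset.sum_mul]
      rw [← hcross]
      ring
    have hD : HasDerivAt (fun t : ℝ =>
        (∑ m, ∑ n, ‖(X - W * H.map (algebraMap ℝ ℍ[ℝ])) m n‖ ^ 2)
          + ((∑ p, ∑ n, ((-2 : ℝ) • ((W.transpose *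
              ((X - W * H.map (algebraMap ℝ ℍ[ℝ])).map star)).map QuaternionAlgebra.re)) p n * V p n) * t
            + (∑ m, ∑ n, ‖(W * V.map (algebraMap ℝ ℍ[ℝ])) m n‖ ^ 2) * t ^ 2))
        (∑ p, ∑ n, ((-2 : ℝ) • ((W.transpose *
            ((X - W * H.map (algebraMap ℝ ℍ[ℝ])).map star)).map QuaternionAlgebra.re)) p n * V p n) 0 := by
      set c1 := (∑ p, ∑ n, ((-2 : ℝ) • ((W.transpose *
            ((X - W * H.map (algebraMap ℝ ℍ[ℝ])).map star)).map QuaternionAlgebra.re)) p n * V p n)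
      set c0 := (∑ m, ∑ n, ‖(X - W * H.map (algebraMap ℝ ℍ[ℝ])) m n‖ ^ 2)
      set c2 := (∑ m, ∑ n, ‖(W * V.map (algebraMap ℝ ℍ[ℝ])) m n‖ ^ 2)
      have h1 : HasDerivAt (fun t : ℝ => c1 * t) c1 0 := by
        simpa using (hasDerivAt_id (0:ℝ)).const_mul c1
      have h2 : HasDerivAt (fun t : ℝ => c2 * t ^ 2) 0 0 := by
        simpa using (hasDerivAt_pow 2 (0:ℝ)).const_mul c2
      simpa using ((h1.add h2).const_add c0)
    rw [show (fun t : ℝ =>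
        ∑ m, ∑ n, ‖(X - W * (H + t • V).map (algebraMap ℝ ℍ[ℝ])) m n‖ ^ 2) = _ from funext hfun]
    exact hD
  · intro hA K
    set Am := (W.transpose * W.map star).map QuaternionAlgebra.re with hAm
    set B0 := (W.transpose * X.map star).map QuaternionAlgebra.re with hB0
    set Hs := Am⁻¹ * B0 with hHs
    have hAdet : IsUnit Am.det := (Matrix.isUnit_iff_isUnit_det _).mp hA
    have hgrad : (W.transpose *
        ((X - W * Hs.map (algebraMap ℝ ℍ[ℝ])).map star)).map QuaternionAlgebra.re = 0 := by
      have e1 : ((X - W * Hs.map (algebraMap ℝ ℍ[ℝ])).map star)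
          = X.map star - (W * Hs.map (algebraMap ℝ ℍ[ℝ])).map star := by
        refine Matrix.ext fun m n => ?_
        simp [Matrix.map_apply, Matrix.sub_apply]
      have e2 : ∀ (Y Z : Matrix (Fin P) (Fin N) ℍ[ℝ]),
          (Y - Z).map QuaternionAlgebra.re = Y.map QuaternionAlgebra.re - Z.map QuaternionAlgebra.re := by
        intro Y Z
        refine Matrix.ext fun p n => ?_
        simp [Matrix.map_apply, Matrix.sub_apply]
        rfl
      rw [e1, Matrix.mul_sub, e2, mapre_decomp', ← hAm, ← hB0, hHs,
        Matrix.mul_nonsing_inv_cancel_left _ _ hAdet, sub_self]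
    have hexpand : ∀ (L : Matrix (Fin P) (Fin N) ℝ),
        (∑ m, ∑ n, ‖(X - W * L.map (algebraMap ℝ ℍ[ℝ])) m n‖ ^ 2)
          = (∑ m, ∑ n, ‖(X - W * Hs.map (algebraMap ℝ ℍ[ℝ])) m n‖ ^ 2)
            + ∑ m, ∑ n, ‖(W * (L - Hs).map (algebraMap ℝ ℍ[ℝ])) m n‖ ^ 2 := by
      intro L
      have h := hexp Hs (L - Hs)
      rw [show Hs + (L - Hs) = L from by abel] at h
      rw [h, hgrad]
      simp
    have hpos : (0:ℝ) ≤ ∑ m, ∑ n, ‖(W * (K - Hs).map (algebraMap ℝ ℍ[ℝ])) m n‖ ^ 2 := by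
      positivity
    constructor
    · show (∑ m, ∑ n, ‖(X - W * Hs.map (algebraMap ℝ ℍ[ℝ])) m n‖ ^ 2)
        ≤ (∑ m, ∑ n, ‖(X - W * K.map (algebraMap ℝ ℍ[ℝ])) m n‖ ^ 2)
      rw [hexpand K]
      linarith
    · intro heq
      have heq' : (∑ m, ∑ n, ‖(X - W * K.map (algebraMap ℝ ℍ[ℝ])) m n‖ ^ 2)
          = (∑ m, ∑ n, ‖(X - W * Hs.map (algebraMap ℝ ℍ[ℝ])) m n‖ ^ 2) := heq
      rw [hexpand K] at heq'
      have hzero : (∑ m, ∑ n, ‖(W * (K - Hs).map (algebraMap ℝ ℍ[ℝ])) m n‖ ^ 2) = 0 := by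
        linarith
      have hent0 : W * (K - Hs).map (algebraMap ℝ ℍ[ℝ]) = 0 := by
        refine Matrix.ext fun m n => ?_
        have h1 : ∀ m ∈ Finset.univ, (0:ℝ) ≤ ∑ n, ‖(W * (K - Hs).map (algebraMap ℝ ℍ[ℝ])) m n‖ ^ 2 := by
          intros; positivity
        have h2 := (Finset.sum_eq_zero_iff_of_nonneg h1).mp hzero m (Finset.mem_univ m)
        have h3 : ∀ n ∈ Finset.univ, (0:ℝ) ≤ ‖(W * (K - Hs).map (algebraMap ℝ ℍ[ℝ])) m n‖ ^ 2 := by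
          intros; positivity
        have h4 := (Finset.sum_eq_zero_iff_of_nonneg h3).mp h2 n (Finset.mem_univ n)
        have h5 : ‖(W * (K - Hs).map (algebraMap ℝ ℍ[ℝ])) m n‖ = 0 := by
          have := sq_eq_zero_iff.mp h4
          exact this
        simpa using h5
      have hAD : Am * (K - Hs) = 0 := by
        rw [← mapre_decomp' W (K - Hs), hent0]
        refine Matrix.ext fun p n => ?_
        simp [Matrix.mul_apply, Matrix.map_apply]
        rfl
      have hD0 : K - Hs = 0 := by
        have h6 := congrArg (fun Z => Am⁻¹ * Z) hAD
        simpa [← Matrix.mul_assoc, Matrix.nonsing_inv_mul _ hAdet] using h6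
      exact sub_eq_zero.mp hD0
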